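/- Let k be a positive integer and Λ a row-finite k-graph without sources. If Λ is cofinal, then the only saturated hereditary subsets of Λ^0 are ∅ and Λ^0. -/
import Mathlib


namespace KP

/-- A `k`-graph: a nonempty countable small category `Λ` together with a degree
functor `d : Λ → ℕ^k` satisfying the unique factorization property.  Objects
(vertices) are identified with identity morphisms via `ident`.  The composition
`comp l m` is only meaningful when `s l = r m`. -/
structure KGraph (k : ℕ) where
  V : Type
  E : Type
  nonemptyV : Nonempty V
  countableE : Countable E
  r : E → V
  s : E → V
  d : E → Fin k → ℕ
  ident : V → E
  comp : E → E → E
  r_ident : ∀ v, r (ident v) = v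
  s_ident : ∀ v, s (ident v) = v
  d_ident : ∀ v, d (ident v) = 0
  r_comp : ∀ ⦃l m : E⦄, s l = r m → r (comp l m) = r l
  s_comp : ∀ ⦃l m : E⦄, s l = r m → s (comp l m) = s m
  d_comp : ∀ ⦃l m : E⦄, s l = r m → d (comp l m) = d l + d m
  comp_assoc : ∀ ⦃l m n : E⦄, s l = r m → s m = r n →
    comp (comp l m) n = comp l (comp m n)
  ident_comp : ∀ l : E, comp (ident (r l)) l = l
  comp_ident : ∀ l : E, comp l (ident (s l)) = l
  eq_ident_of_d_eq_zero : ∀ l : E, d l = 0 → l = ident (r l)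
  factor : ∀ (l : E) (m n : Fin k → ℕ), d l = m + n →
    ∃! p : E × E, d p.1 = m ∧ d p.2 = n ∧ s p.1 = r p.2 ∧ comp p.1 p.2 = l

namespace KGraph

variable {k : ℕ}

/-- `Λ` is row-finite if every `vΛ^n` is finite. -/
def RowFinite (Λ : KGraph k) : Prop :=
  ∀ (v : Λ.V) (n : Fin k → ℕ), {l : Λ.E | Λ.r l = v ∧ Λ.d l = n}.Finite

/-- `Λ` has no sources if every `vΛ^n` is nonempty. -/
def NoSources (Λ : KGraph k) : Prop :=
  ∀ (v : Λ.V) (n : Fin k → ℕ), ∃ l : Λ.E, Λ.r l = v ∧ Λ.d l = n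

/-- `H ⊆ Λ^0` is hereditary if `r(l) ∈ H` implies `s(l) ∈ H`. -/
def HereditarySet (Λ : KGraph k) (H : Set Λ.V) : Prop :=
  ∀ l : Λ.E, Λ.r l ∈ H → Λ.s l ∈ H

/-- `H ⊆ Λ^0` is saturated if `s(vΛ^n) ⊆ H` implies `v ∈ H`. -/
def SaturatedSet (Λ : KGraph k) (H : Set Λ.V) : Prop :=
  ∀ (v : Λ.V) (n : Fin k → ℕ),
    (∀ l : Λ.E, Λ.r l = v → Λ.d l = n → Λ.s l ∈ H) → v ∈ H

open Classical in
/-- The segment `l(p,q)` of a path `l`: the unique middle factor in a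
factorization `l = l'l''l'''` with `d l' = p` and `d l'' = q - p` (when `p ≤ q ≤ d l`). -/
noncomputable def seg (Λ : KGraph k) (l : Λ.E) (p q : Fin k → ℕ) : Λ.E :=
  if h : ∃ t : Λ.E × Λ.E × Λ.E, Λ.d t.1 = p ∧ Λ.d t.2.1 = q - p ∧
      Λ.s t.1 = Λ.r t.2.1 ∧ Λ.s t.2.1 = Λ.r t.2.2 ∧
      Λ.comp t.1 (Λ.comp t.2.1 t.2.2) = l
  then (Classical.choose h).2.1 else l

/-- Aperiodicity in the finite-path formulation of Robertson and Sims. -/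
def Aperiodic (Λ : KGraph k) : Prop :=
  ∀ (v : Λ.V) (m n : Fin k → ℕ), m ≠ n →
    ∃ l : Λ.E, Λ.r l = v ∧ m ⊔ n ≤ Λ.d l ∧
      Λ.seg l m (m + Λ.d l - m ⊔ n) ≠ Λ.seg l n (n + Λ.d l - m ⊔ n)

end KGraph

/-- An infinite path in `Λ`: a degree-preserving functor `x : Ω_k → Λ`,
recorded by its segments `x.f p q = x(p,q)` for `p ≤ q`. -/
structure InfPath {k : ℕ} (Λ : KGraph k) where
  f : (Fin k → ℕ) → (Fin k → ℕ) → Λ.E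
  deg : ∀ p q : Fin k → ℕ, p ≤ q → Λ.d (f p q) = q - p
  compat : ∀ p q u : Fin k → ℕ, p ≤ q → q ≤ u → Λ.s (f p q) = Λ.r (f q u)
  comp_f : ∀ p q u : Fin k → ℕ, p ≤ q → q ≤ u → Λ.comp (f p q) (f q u) = f p u

/-- The vertex `x(n)` of an infinite path. -/
def InfPath.vtx {k : ℕ} {Λ : KGraph k} (x : InfPath Λ) (n : Fin k → ℕ) : Λ.V :=
  Λ.r (x.f n n)

/-- `Λ` is cofinal if for every infinite path `x` and vertex `v` there is `n`
with `vΛx(n)` nonempty. -/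
def KGraph.Cofinal {k : ℕ} (Λ : KGraph k) : Prop :=
  ∀ (x : InfPath Λ) (v : Λ.V), ∃ (n : Fin k → ℕ) (l : Λ.E),
    Λ.r l = v ∧ Λ.s l = x.vtx n

/-- A Kumjian-Pask `Λ`-family in a ring `A`.  `P v = P_v`, `S l = S_l` and
`S' l = S_{l*}`; by convention `S` and `S'` are extended to vertices (paths of
degree `0`) by `S_v = S_{v*} = P_v`. -/
structure KPFamily {k : ℕ} (Λ : KGraph k) (A : Type) [Ring A] where
  P : Λ.V → A
  S : Λ.E → A
  S' : Λ.E → A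
  S_ident : ∀ v, S (Λ.ident v) = P v
  S'_ident : ∀ v, S' (Λ.ident v) = P v
  idem : ∀ v, P v * P v = P v
  orth : ∀ v w, v ≠ w → P v * P w = 0
  mul_S : ∀ ⦃l m : Λ.E⦄, Λ.d l ≠ 0 → Λ.d m ≠ 0 → Λ.s l = Λ.r m →
    S l * S m = S (Λ.comp l m)
  mul_S' : ∀ ⦃l m : Λ.E⦄, Λ.d l ≠ 0 → Λ.d m ≠ 0 → Λ.s l = Λ.r m →
    S' m * S' l = S' (Λ.comp l m)
  P_mul_S : ∀ l : Λ.E, Λ.d l ≠ 0 → P (Λ.r l) * S l = S l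
  S_mul_P : ∀ l : Λ.E, Λ.d l ≠ 0 → S l * P (Λ.s l) = S l
  P_mul_S' : ∀ l : Λ.E, Λ.d l ≠ 0 → P (Λ.s l) * S' l = S' l
  S'_mul_P : ∀ l : Λ.E, Λ.d l ≠ 0 → S' l * P (Λ.r l) = S' l
  KP3_eq : ∀ l : Λ.E, Λ.d l ≠ 0 → S' l * S l = P (Λ.s l)
  KP3_ne : ∀ l m : Λ.E, Λ.d l ≠ 0 → Λ.d l = Λ.d m → l ≠ m → S' l * S m = 0
  KP4 : ∀ (v : Λ.V) (n : Fin k → ℕ), n ≠ 0 → ∀ F : Finset Λ.E,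
    (∀ l : Λ.E, l ∈ F ↔ Λ.r l = v ∧ Λ.d l = n) →
    P v = ∑ l ∈ F, S l * S' l

/-- The Kumjian-Pask algebra of `Λ` with coefficients in `R`: an `R`-algebra
`A` together with a generating Kumjian-Pask family `(p,s)` which is universal
for Kumjian-Pask `Λ`-families, carries a `ℤ^k`-grading with the prescribed
homogeneous components, and in which `r • p_v ≠ 0` for `r ≠ 0`. -/
structure KPAlgebra {k : ℕ} (Λ : KGraph k) (R : Type) [CommRing R]
    (A : Type) [Ring A] [Algebra R A] where
  fam : KPFamily Λ A
  universal : ∀ (B : Type) [Ring B] [Algebra R B] (QT : KPFamily Λ B),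
    ∃! φ : A →ₐ[R] B,
      (∀ v, φ (fam.P v) = QT.P v) ∧
      (∀ l, Λ.d l ≠ 0 → φ (fam.S l) = QT.S l) ∧
      (∀ l, Λ.d l ≠ 0 → φ (fam.S' l) = QT.S' l)
  grading : (Fin k → ℤ) → AddSubgroup A
  grading_mul : ∀ (m n : Fin k → ℤ), ∀ a ∈ grading m, ∀ b ∈ grading n,
    a * b ∈ grading (m + n)
  grading_internal : DirectSum.IsInternal grading
  grading_eq : ∀ n : Fin k → ℤ, (grading n : Set A) =
    ↑(Submodule.span R {x : A | ∃ l m : Λ.E,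
      (fun i => (Λ.d l i : ℤ) - (Λ.d m i : ℤ)) = n ∧ x = fam.S l * fam.S' m})
  smul_P_ne_zero : ∀ (v : Λ.V) (c : R), c ≠ 0 → c • fam.P v ≠ 0

/-- A `G`-grading on a ring `A`: additive subgroups with `A_g A_h ⊆ A_{g+h}`
such that `A` is their internal direct sum. -/
def IsGrading {G A : Type} [AddCommGroup G] [DecidableEq G] [Ring A]
    (gr : G → AddSubgroup A) : Prop :=
  (∀ g h : G, ∀ a ∈ gr g, ∀ b ∈ gr h, a * b ∈ gr (g + h)) ∧
  DirectSum.IsInternal gr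

/-- An ideal `I` is graded when every element of `I` is a sum of homogeneous
elements of `I`, i.e. `I = Σ_g (I ∩ A_g)`. -/
def IsGradedIdeal {G A : Type} [Ring A] (gr : G → AddSubgroup A)
    (I : TwoSidedIdeal A) : Prop :=
  ∀ x ∈ I, x ∈ AddSubgroup.closure {y : A | y ∈ I ∧ ∃ g : G, y ∈ gr g}

/-- An ideal `I` of `KP_R(Λ)` is basic if `c • p_v ∈ I` with `c ≠ 0` implies `p_v ∈ I`. -/
def IsBasic {k : ℕ} {Λ : KGraph k} {R : Type} [CommRing R]
    {A : Type} [Ring A] [Algebra R A] (KP : KPAlgebra Λ R A)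
    (I : TwoSidedIdeal A) : Prop :=
  ∀ (c : R) (v : Λ.V), c ≠ 0 → c • KP.fam.P v ∈ I → KP.fam.P v ∈ I

/-- An ideal is idempotent if it is spanned by products `a * b` with `a, b ∈ I`. -/
def IsIdempotentIdeal {A : Type} [Ring A] (I : TwoSidedIdeal A) : Prop :=
  (I : Set A) ⊆ ↑(AddSubgroup.closure {x : A | ∃ a ∈ I, ∃ b ∈ I, x = a * b})

/-- `RestrCompat Λ H Λ' eV eE` asserts that `Λ'` is (a realization of) the
subgraph `Λ∖H = (Λ^0∖H, {l ∈ Λ : s(l) ∉ H}, r, s)` with the restricted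
structure maps, the identifications being given by the equivalences `eV`, `eE`. -/
def RestrCompat {k : ℕ} (Λ : KGraph k) (H : Set Λ.V) (Λ' : KGraph k)
    (eV : Λ'.V ≃ {v : Λ.V // v ∉ H}) (eE : Λ'.E ≃ {l : Λ.E // Λ.s l ∉ H}) : Prop :=
  (∀ l : Λ'.E, (eV (Λ'.r l)).1 = Λ.r (eE l).1) ∧
  (∀ l : Λ'.E, (eV (Λ'.s l)).1 = Λ.s (eE l).1) ∧
  (∀ l : Λ'.E, Λ'.d l = Λ.d (eE l).1) ∧
  (∀ v : Λ'.V, (eE (Λ'.ident v)).1 = Λ.ident (eV v).1) ∧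
  (∀ l m : Λ'.E, Λ'.s l = Λ'.r m →
    (eE (Λ'.comp l m)).1 = Λ.comp (eE l).1 (eE m).1)

/-- `Ind M`: the ideal of `KP_R(Λ)` induced by a set (ideal) `M` of coefficients,
`Ind M = span_R {c • s_a s_{b*} : c ∈ M, a b ∈ Λ}`. -/
def IndSpan {k : ℕ} {Λ : KGraph k} {R : Type} [CommRing R]
    {A : Type} [Ring A] [Algebra R A] (KP : KPAlgebra Λ R A) (M : Set R) :
    Submodule R A :=
  Submodule.span R {x : A | ∃ c ∈ M, ∃ a b : Λ.E, x = c • (KP.fam.S a * KP.fam.S' b)}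

/-- `Res I = {c ∈ R : c • p_v ∈ I for all v ∈ Λ^0}`. -/
def ResSet {k : ℕ} {Λ : KGraph k} {R : Type} [CommRing R]
    {A : Type} [Ring A] [Algebra R A] (KP : KPAlgebra Λ R A) (I : Set A) : Set R :=
  {c : R | ∀ v : Λ.V, c • KP.fam.P v ∈ I}


section Aux

variable {k : ℕ} {Λ : KGraph k}

/-- Uniqueness of factorizations with prescribed left degree. -/
lemma fac_unique {a b a' b' : Λ.E}
    (hab : Λ.s a = Λ.r b) (hab' : Λ.s a' = Λ.r b')
    (hc : Λ.comp a b = Λ.comp a' b') (hda : Λ.d a = Λ.d a') :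
    a = a' ∧ b = b' := by
  obtain ⟨P, -, hu⟩ := Λ.factor (Λ.comp a b) (Λ.d a) (Λ.d b) (Λ.d_comp hab)
  have hdb : Λ.d b' = Λ.d b := by
    have h2 : Λ.d a + Λ.d b = Λ.d a' + Λ.d b' := by
      rw [← Λ.d_comp hab, ← Λ.d_comp hab', hc]
    rw [hda] at h2
    exact (add_left_cancel h2).symm
  have e1 := hu (a, b) ⟨rfl, rfl, hab, rfl⟩
  have e2 := hu (a', b') ⟨hda.symm, hdb, hab', hc.symm⟩
  have e := e1.trans e2.symm
  exact ⟨congrArg Prod.fst e, congrArg Prod.snd e⟩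

/-- Uniqueness of triple factorizations with prescribed degrees. -/
lemma triple_unique {l a b c a' b' c' : Λ.E}
    (h1 : Λ.s a = Λ.r b) (h2 : Λ.s b = Λ.r c) (h3 : Λ.comp a (Λ.comp b c) = l)
    (h1' : Λ.s a' = Λ.r b') (h2' : Λ.s b' = Λ.r c')
    (h3' : Λ.comp a' (Λ.comp b' c') = l)
    (hda : Λ.d a = Λ.d a') (hdb : Λ.d b = Λ.d b') :
    a = a' ∧ b = b' ∧ c = c' := by
  have hab : Λ.s a = Λ.r (Λ.comp b c) := by rw [Λ.r_comp h2]; exact h1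
  have hab' : Λ.s a' = Λ.r (Λ.comp b' c') := by rw [Λ.r_comp h2']; exact h1'
  obtain ⟨ea, ebc⟩ := fac_unique hab hab' (h3.trans h3'.symm) hda
  obtain ⟨eb, ec⟩ := fac_unique h2 h2' ebc hdb
  exact ⟨ea, eb, ec⟩

/-- `seg` computes the middle factor of any valid triple factorization. -/
lemma seg_eq {l a b c : Λ.E} {p q : Fin k → ℕ}
    (hda : Λ.d a = p) (hdb : Λ.d b = q - p)
    (h1 : Λ.s a = Λ.r b) (h2 : Λ.s b = Λ.r c)
    (h3 : Λ.comp a (Λ.comp b c) = l) :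
    Λ.seg l p q = b := by
  have hex : ∃ t : Λ.E × Λ.E × Λ.E, Λ.d t.1 = p ∧ Λ.d t.2.1 = q - p ∧
      Λ.s t.1 = Λ.r t.2.1 ∧ Λ.s t.2.1 = Λ.r t.2.2 ∧
      Λ.comp t.1 (Λ.comp t.2.1 t.2.2) = l := ⟨(a, b, c), hda, hdb, h1, h2, h3⟩
  unfold KGraph.seg
  rw [dif_pos hex]
  obtain ⟨g1, g2, g3, g4, g5⟩ := Classical.choose_spec hex
  exact (triple_unique g3 g4 g5 h1 h2 h3 (g1.trans hda.symm)
    (g2.trans hdb.symm)).2.1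

/-- Existence of triple factorizations. -/
lemma triple_exists (l : Λ.E) (p q : Fin k → ℕ) (hpq : p ≤ q)
    (hq : q ≤ Λ.d l) :
    ∃ a b c : Λ.E, Λ.d a = p ∧ Λ.d b = q - p ∧ Λ.d c = Λ.d l - q ∧
      Λ.s a = Λ.r b ∧ Λ.s b = Λ.r c ∧ Λ.comp a (Λ.comp b c) = l := by
  have hd1 : Λ.d l = p + (Λ.d l - p) := by
    funext i
    have h1 : p i ≤ q i := hpq i
    have h2 : q i ≤ Λ.d l i := hq i
    simp only [Pi.add_apply, Pi.sub_apply]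
    omega
  obtain ⟨⟨a, c0⟩, ⟨hda, hdc0, hsa, hca⟩, -⟩ := Λ.factor l p (Λ.d l - p) hd1
  have hd2 : Λ.d c0 = (q - p) + (Λ.d l - q) := by
    rw [hdc0]
    funext i
    have h1 : p i ≤ q i := hpq i
    have h2 : q i ≤ Λ.d l i := hq i
    simp only [Pi.add_apply, Pi.sub_apply]
    omega
  obtain ⟨⟨b, c⟩, ⟨hdb, hdc, hsb, hcb⟩, -⟩ :=
    Λ.factor c0 (q - p) (Λ.d l - q) hd2
  refine ⟨a, b, c, hda, hdb, hdc, ?_, hsb, ?_⟩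
  · rw [hsa, ← hcb, Λ.r_comp hsb]
  · rw [hcb]; exact hca

/-- `seg` is unaffected by extending the path on the right. -/
lemma seg_comp_right {l t : Λ.E} {p q : Fin k → ℕ}
    (hpq : p ≤ q) (hq : q ≤ Λ.d l) (hst : Λ.s l = Λ.r t) :
    Λ.seg (Λ.comp l t) p q = Λ.seg l p q := by
  obtain ⟨a, b, c, hda, hdb, hdc, h1, h2, h3⟩ := triple_exists l p q hpq hq
  rw [seg_eq hda hdb h1 h2 h3]
  have hsl : Λ.s l = Λ.s c := by
    rw [← h3, Λ.s_comp (by rw [Λ.r_comp h2]; exact h1), Λ.s_comp h2]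
  have hsc : Λ.s c = Λ.r t := hsl ▸ hst
  have h2' : Λ.s b = Λ.r (Λ.comp c t) := by rw [Λ.r_comp hsc]; exact h2
  have h3' : Λ.comp a (Λ.comp b (Λ.comp c t)) = Λ.comp l t := by
    rw [← Λ.comp_assoc h2 hsc, ← Λ.comp_assoc (by rw [Λ.r_comp h2]; exact h1)
      (by rw [Λ.s_comp h2]; exact hsc), h3]
  exact seg_eq hda hdb h1 h2' h3'

end Aux

/-- **Lemma 5.11.**  If `Λ` is cofinal then the only saturated hereditary
subsets of `Λ^0` are `∅` and `Λ^0`. -/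
theorem saturated_hereditary_trivial_of_cofinal (k : ℕ) (hk : 0 < k)
    (Λ : KGraph k) (hrf : Λ.RowFinite) (hns : Λ.NoSources)
    (hcof : Λ.Cofinal) (H : Set Λ.V)
    (hher : Λ.HereditarySet H) (hsat : Λ.SaturatedSet H) :
    H = ∅ ∨ H = Set.univ := by
  by_contra hcon
  push_neg at hcon
  obtain ⟨hne, hnuniv⟩ := hcon
  obtain ⟨w, hw⟩ := hne
  obtain ⟨v, hv⟩ : ∃ v : Λ.V, v ∉ H := by
    by_contra h
    push_neg at h
    exact hnuniv (Set.eq_univ_of_forall h)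
  -- From saturation: every vertex outside `H` emits a path of any degree
  -- whose source is outside `H`.
  have step : ∀ u : {w : Λ.V // w ∉ H}, ∃ l : Λ.E,
      Λ.r l = u.1 ∧ Λ.d l = (fun _ => 1) ∧ Λ.s l ∉ H := by
    rintro ⟨u, hu⟩
    by_contra hc
    push_neg at hc
    exact hu (hsat u (fun _ => 1) (fun l hrl hdl => hc l hrl hdl))
  choose f hf1 hf2 hf3 using step
  -- chain of vertices outside H and the composed paths g j of degree (j,…,j)
  let u : ℕ → {w : Λ.V // w ∉ H} := fun j =>
    Nat.rec ⟨v, hv⟩ (fun _ prev => ⟨Λ.s (f prev), hf3 prev⟩) j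
  let g : ℕ → Λ.E := fun j =>
    Nat.rec (Λ.ident v) (fun i prev => Λ.comp prev (f (u i))) j
  have hg0 : g 0 = Λ.ident v := rfl
  have hgsucc : ∀ j, g (j + 1) = Λ.comp (g j) (f (u j)) := fun _ => rfl
  have husucc : ∀ j, (u (j + 1)).1 = Λ.s (f (u j)) := fun _ => rfl
  have hgs : ∀ j, Λ.s (g j) = (u j).1 := by
    intro j
    induction j with
    | zero => rw [hg0, Λ.s_ident]; rfl
    | succ j ih =>
      rw [hgsucc j, Λ.s_comp (by rw [ih, hf1]), husucc j]
  have hgr : ∀ j, Λ.s (g j) = Λ.r (f (u j)) := by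
    intro j; rw [hgs j, hf1]
  have hgd : ∀ j, Λ.d (g j) = fun _ => j := by
    intro j
    induction j with
    | zero => rw [hg0, Λ.d_ident]; rfl
    | succ j ih =>
      rw [hgsucc j, Λ.d_comp (hgr j), ih, hf2]
      funext i
      simp [Pi.add_apply]
  have hgnotH : ∀ j, Λ.s (g j) ∉ H := by
    intro j; rw [hgs j]; exact (u j).2
  -- stability of segments under extension
  have hstab : ∀ (N : ℕ) (p q : Fin k → ℕ), p ≤ q → (q ≤ fun _ => N) →
      ∀ M, N ≤ M → Λ.seg (g M) p q = Λ.seg (g N) p q := by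
    intro N p q hpq hqN M hNM
    induction M with
    | zero =>
      have : N = 0 := Nat.le_zero.mp hNM
      rw [this]
    | succ M ih =>
      rcases Nat.lt_or_ge N (M + 1) with h | h
      · have hNM' : N ≤ M := by omega
        rw [← ih hNM', hgsucc M]
        refine seg_comp_right hpq ?_ (hgr M)
        rw [hgd M]
        intro i
        show q i ≤ M
        have h5 : q i ≤ N := hqN i
        omega
      · have : N = M + 1 := by omega
        rw [this]
  set Nq : (Fin k → ℕ) → ℕ := fun q => Finset.univ.sup q with hNqdef
  have hNqle : ∀ q : Fin k → ℕ, q ≤ fun _ => Nq q := by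
    intro q i
    exact Finset.le_sup (Finset.mem_univ i)
  have hNqmono : ∀ p q : Fin k → ℕ, p ≤ q → Nq p ≤ Nq q := by
    intro p q hpq
    exact Finset.sup_mono_fun (fun i _ => hpq i)
  have hqd : ∀ (q : Fin k → ℕ) (N : ℕ), (q ≤ fun _ => N) → q ≤ Λ.d (g N) := by
    intro q N h
    rw [hgd N]; exact h
  -- build the infinite path
  obtain ⟨x, hx⟩ : ∃ x : InfPath Λ, ∀ n, x.vtx n ∉ H := by
    refine ⟨⟨fun p q => Λ.seg (g (Nq q)) p q, ?_, ?_, ?_⟩, ?_⟩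
    · -- deg
      intro p q hpq
      show Λ.d (Λ.seg (g (Nq q)) p q) = q - p
      obtain ⟨a, b, c, hda, hdb, hdc, h1, h2, h3⟩ :=
        triple_exists (g (Nq q)) p q hpq (hqd q _ (hNqle q))
      rw [seg_eq hda hdb h1 h2 h3]
      exact hdb
    · -- compat
      intro p q r hpq hqr
      show Λ.s (Λ.seg (g (Nq q)) p q) = Λ.r (Λ.seg (g (Nq r)) q r)
      rw [← hstab (Nq q) p q hpq (hNqle q) (Nq r) (hNqmono q r hqr)]
      obtain ⟨a, b, c, hda, hdb, hdc, h1, h2, h3⟩ :=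
        triple_exists (g (Nq r)) p q hpq
          (hqd q _ (le_trans hqr (hNqle r)))
      rw [seg_eq hda hdb h1 h2 h3]
      have hdc2 : Λ.d c = (r - q) + (Λ.d (g (Nq r)) - r) := by
        rw [hdc, hgd]
        funext i
        have e1 : q i ≤ r i := hqr i
        have e2 : r i ≤ Nq r := hNqle r i
        simp only [Pi.add_apply, Pi.sub_apply]
        omega
      obtain ⟨⟨c1, c2⟩, ⟨hdc1, hdc2', hsc1, hcc⟩, -⟩ :=
        Λ.factor c (r - q) (Λ.d (g (Nq r)) - r) hdc2
      have hsb : Λ.s b = Λ.r c1 := by rw [h2, ← hcc, Λ.r_comp hsc1]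
      have hdab : Λ.d (Λ.comp a b) = q := by
        rw [Λ.d_comp h1, hda, hdb]
        funext i
        have e0 : p i ≤ q i := hpq i
        simp only [Pi.add_apply, Pi.sub_apply]
        omega
      have hsab : Λ.s (Λ.comp a b) = Λ.r c1 := by rw [Λ.s_comp h1]; exact hsb
      have h3' : Λ.comp (Λ.comp a b) (Λ.comp c1 c2) = g (Nq r) := by
        rw [hcc, Λ.comp_assoc h1 h2]; exact h3
      rw [seg_eq hdab hdc1 hsab hsc1 h3']
      exact hsb
    · -- comp_f
      intro p q r hpq hqr
      show Λ.comp (Λ.seg (g (Nq q)) p q) (Λ.seg (g (Nq r)) q r) =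
        Λ.seg (g (Nq r)) p r
      rw [← hstab (Nq q) p q hpq (hNqle q) (Nq r) (hNqmono q r hqr)]
      obtain ⟨a, b, c, hda, hdb, hdc, h1, h2, h3⟩ :=
        triple_exists (g (Nq r)) p q hpq
          (hqd q _ (le_trans hqr (hNqle r)))
      rw [seg_eq hda hdb h1 h2 h3]
      have hdc2 : Λ.d c = (r - q) + (Λ.d (g (Nq r)) - r) := by
        rw [hdc, hgd]
        funext i
        have e1 : q i ≤ r i := hqr i
        have e2 : r i ≤ Nq r := hNqle r i
        simp only [Pi.add_apply, Pi.sub_apply]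
        omega
      obtain ⟨⟨c1, c2⟩, ⟨hdc1, hdc2', hsc1, hcc⟩, -⟩ :=
        Λ.factor c (r - q) (Λ.d (g (Nq r)) - r) hdc2
      have hsb : Λ.s b = Λ.r c1 := by rw [h2, ← hcc, Λ.r_comp hsc1]
      -- seg (g (Nq r)) q r = c1
      have hdab : Λ.d (Λ.comp a b) = q := by
        rw [Λ.d_comp h1, hda, hdb]
        funext i
        have e0 : p i ≤ q i := hpq i
        simp only [Pi.add_apply, Pi.sub_apply]
        omega
      have hsab : Λ.s (Λ.comp a b) = Λ.r c1 := by rw [Λ.s_comp h1]; exact hsb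
      have h3' : Λ.comp (Λ.comp a b) (Λ.comp c1 c2) = g (Nq r) := by
        rw [hcc, Λ.comp_assoc h1 h2]; exact h3
      rw [seg_eq hdab hdc1 hsab hsc1 h3']
      -- seg (g (Nq r)) p r = comp b c1
      have hdbc1 : Λ.d (Λ.comp b c1) = r - p := by
        rw [Λ.d_comp hsb, hdb, hdc1]
        funext i
        have e0 : p i ≤ q i := hpq i
        have e1 : q i ≤ r i := hqr i
        simp only [Pi.add_apply, Pi.sub_apply]
        omega
      have h1' : Λ.s a = Λ.r (Λ.comp b c1) := by rw [Λ.r_comp hsb]; exact h1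
      have h2' : Λ.s (Λ.comp b c1) = Λ.r c2 := by rw [Λ.s_comp hsb]; exact hsc1
      have h3'' : Λ.comp a (Λ.comp (Λ.comp b c1) c2) = g (Nq r) := by
        rw [Λ.comp_assoc hsb hsc1, hcc]; exact h3
      rw [seg_eq hda hdbc1 h1' h2' h3'']
    · -- all vertices of x avoid H
      intro n
      show Λ.r (Λ.seg (g (Nq n)) n n) ∉ H
      obtain ⟨a, b, c, hda, hdb, hdc, h1, h2, h3⟩ :=
        triple_exists (g (Nq n)) n n le_rfl (hqd n _ (hNqle n))
      rw [seg_eq hda hdb h1 h2 h3]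
      have hsc : Λ.s c = Λ.s (g (Nq n)) := by
        rw [← h3, Λ.s_comp (by rw [Λ.r_comp h2]; exact h1), Λ.s_comp h2]
      have hscH : Λ.s c ∉ H := by rw [hsc]; exact hgnotH (Nq n)
      have hrcH : Λ.r c ∉ H := fun h => hscH (hher c h)
      intro h
      exact hrcH (h2 ▸ hher b h)
  obtain ⟨n, l, hrl, hsl⟩ := hcof x w
  exact hx n (hsl ▸ hher l (hrl.symm ▸ hw))

end KP
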